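/- The one-sided process {X̃_n}_{n=-∞}^0 has the same finite-dimensional distributions as {X_n}: for all n ≥ 0 and all x_{-n}^0 ∈ {0,1}^{n+1}, P(X̃_{-n}^0 = x_{-n}^0) = P(X_{-n}^0 = x_{-n}^0). In particular, X̃ is stationary. -/

import Mathlib

open MeasureTheory Filter Finset

/-- Two-sided binary sequences: the sample space of the process `X_n(ω) = ω n`. -/
abbrev BSeq := ℤ → Bool

/-- The left shift on two-sided sequences. -/
def shift : BSeq → BSeq := fun ω n => ω (n + 1)

/-- The recurrence stopping times `λ_k`:  `λ_0 = 0`,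
`λ_{k+1} = λ_k + min {t > 0 : X_t^{λ_k + t} = X_0^{λ_k}}`. -/
noncomputable def lam : ℕ → BSeq → ℕ
  | 0, _ => 0
  | k + 1, ω =>
      lam k ω +
        sInf {t : ℕ | 0 < t ∧ ∀ i : ℕ, i ≤ lam k ω → ω ((t : ℤ) + (i : ℤ)) = ω (i : ℤ)}

/-- The increments `τ_k = λ_k - λ_{k-1}`. -/
noncomputable def tau (k : ℕ) (ω : BSeq) : ℕ := lam k ω - lam (k - 1) ω

/-- The auxiliary process `X̃`:  `X̃_{-n} = X_{λ_n - n}` (so that `X̃_{-λ_k}^0 = X_0^{λ_k}`).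
Here `tildeX n ω` stands for `X̃_{-n}(ω)`. -/
noncomputable def tildeX (n : ℕ) (ω : BSeq) : Bool := ω ((lam n ω : ℤ) - (n : ℤ))

/-- The one-sided sequence `X̃_0, X̃_{-1}, X̃_{-2}, …`. -/
noncomputable def tilSeq (ω : BSeq) : ℕ → Bool := fun j => tildeX j ω

/-- The one-sided past `X_0, X_{-1}, X_{-2}, …` of the original process. -/
def past (ω : BSeq) : ℕ → Bool := fun j => ω (-(j : ℤ))

/-- Backward recurrence stopping times `λ̂_k` for a one-sided sequence
`y = (Y_0, Y_{-1}, Y_{-2}, …)` (with `y j = Y_{-j}`):  `λ̂_0 = 0`,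
`λ̂_{k+1} = λ̂_k + min {t > 0 : Y_{-λ̂_k - t}^{-t} = Y_{-λ̂_k}^0}`. -/
noncomputable def hlam : ℕ → (ℕ → Bool) → ℕ
  | 0, _ => 0
  | k + 1, y => hlam k y + sInf {t : ℕ | 0 < t ∧ ∀ i : ℕ, i ≤ hlam k y → y (t + i) = y i}

/-- The backward increments `τ̂_k = λ̂_k - λ̂_{k-1}`. -/
noncomputable def tauhat (k : ℕ) (y : ℕ → Bool) : ℕ := hlam k y - hlam (k - 1) y

/-- The observation map recording the finite data segment `X_0^{L(ω)}`
(coded over `ℕ`, with `2` marking unobserved coordinates). -/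
noncomputable def obs (L : BSeq → ℕ) (ω : BSeq) : ℕ → ℕ :=
  fun n => if n ≤ L ω then (if ω (n : ℤ) then 1 else 0) else 2

/-- The σ-algebra `σ(X_0^{λ_k})`. -/
noncomputable def Fk (k : ℕ) : MeasurableSpace BSeq :=
  MeasurableSpace.comap (obs (lam k)) (inferInstance : MeasurableSpace (ℕ → ℕ))

/-- The σ-algebra `σ(X_0^{λ_k + 1})`. -/
noncomputable def Gk (k : ℕ) : MeasurableSpace BSeq :=
  MeasurableSpace.comap (obs (fun ω => lam k ω + 1)) (inferInstance : MeasurableSpace (ℕ → ℕ))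

/-- The output following the `k`-th recurrence: `X_{λ_k + 1}` (as a real number). -/
noncomputable def Xnext (k : ℕ) (ω : BSeq) : ℝ := if ω ((lam k ω : ℤ) + 1) then 1 else 0

/-- The estimator `P_k = (1/(k-1)) ∑_{j=1}^{k-1} X_{λ_j + 1}`. -/
noncomputable def Pk (k : ℕ) (ω : BSeq) : ℝ :=
  (1 / ((k : ℝ) - 1)) * ∑ j ∈ Finset.Icc 1 (k - 1), Xnext j ω

/-- The conditional probability `Δ_k = P(X_{λ_k+1} = 1 | X_0^{λ_k})`. -/
noncomputable def Delta (μ : Measure BSeq) (k : ℕ) : BSeq → ℝ := μ[Xnext k | Fk k]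

/-- The recurrence time `R(l)` of the length-`(l+1)` past:
`R(l) = min {j ≥ l+1 : X_{-l-j}^{-j} = X_{-l}^0}`. -/
noncomputable def Rrec (l : ℕ) (ω : BSeq) : ℕ :=
  sInf {j : ℕ | l + 1 ≤ j ∧ ∀ i : ℕ, i ≤ l → ω (-(j : ℤ) - (i : ℤ)) = ω (-(i : ℤ))}

/-- The probability of the block `x_0^n`. -/
noncomputable def blockProb (μ : Measure BSeq) (n : ℕ) (x : ℕ → Bool) : ENNReal :=
  μ {ω | ∀ i : ℕ, i ≤ n → ω (i : ℤ) = x i}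

/-- The `n`-th entropy term `-(1/(n+1)) E log₂ p(X_0, …, X_n)`. -/
noncomputable def entropyTerm (μ : Measure BSeq) (n : ℕ) : ℝ :=
  -(1 / ((n : ℝ) + 1)) *
    ∫ ω, Real.logb 2 ((blockProb μ n (fun i => ω (i : ℤ))).toReal) ∂μ

section Comb

variable {ω : BSeq}

/-- The forward recurrence candidate set at stage `k`. -/
def Sf (k : ℕ) (ω : BSeq) : Set ℕ :=
  {t : ℕ | 0 < t ∧ ∀ i : ℕ, i ≤ lam k ω → ω ((t : ℤ) + (i : ℤ)) = ω (i : ℤ)}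

lemma lam_succ (k : ℕ) (ω : BSeq) : lam (k + 1) ω = lam k ω + sInf (Sf k ω) := rfl

/-- Sample points whose every forward recurrence actually occurs. -/
def Good (ω : BSeq) : Prop := ∀ k, (Sf k ω).Nonempty

lemma good_mem (hg : Good ω) (k : ℕ) : sInf (Sf k ω) ∈ Sf k ω := Nat.sInf_mem (hg k)

lemma lam_le_succ (k : ℕ) : lam k ω ≤ lam (k + 1) ω := Nat.le_add_right _ _

lemma lam_mono {j k : ℕ} (h : j ≤ k) : lam j ω ≤ lam k ω := by
  induction k with
  | zero => simpa using Nat.le_zero.mp h ▸ le_refl _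
  | succ k ih =>
    rcases Nat.lt_or_ge j (k + 1) with h' | h'
    · exact le_trans (ih (Nat.lt_succ_iff.mp h')) (lam_le_succ k)
    · have : j = k + 1 := le_antisymm h h'
      simp [this]

lemma lam_lt_succ (hg : Good ω) (k : ℕ) : lam k ω < lam (k + 1) ω := by
  have h := (good_mem hg k).1
  have := lam_succ k ω
  omega

lemma le_lam (hg : Good ω) (k : ℕ) : k ≤ lam k ω := by
  induction k with
  | zero => simp [lam]
  | succ k ih => have := lam_lt_succ hg k; omega

/-- The initial block of length `lam j + 1` recurs at `lam k - lam j` for any `j ≤ k`. -/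
lemma block_match (hg : Good ω) {j k : ℕ} (h : j ≤ k) :
    ∀ i : ℕ, i ≤ lam j ω → ω ((lam k ω : ℤ) - (lam j ω : ℤ) + (i : ℤ)) = ω (i : ℤ) := by
  induction k with
  | zero =>
    have : j = 0 := Nat.le_zero.mp h
    subst this; intro i hi; norm_num
  | succ k ih =>
    rcases Nat.lt_or_ge j (k + 1) with h' | h'
    · have hjk : j ≤ k := Nat.lt_succ_iff.mp h'
      intro i hi
      have hd := good_mem hg k
      set d := sInf (Sf k ω) with hdd
      have hlam1 : lam (k + 1) ω = lam k ω + d := lam_succ k ω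
      have hjle : lam j ω ≤ lam k ω := lam_mono hjk
      set u : ℕ := lam k ω - lam j ω + i with hu
      have hule : u ≤ lam k ω := by omega
      have h1 : ω ((d : ℤ) + (u : ℤ)) = ω (u : ℤ) := hd.2 u hule
      have harg : (lam (k + 1) ω : ℤ) - (lam j ω : ℤ) + (i : ℤ) = (d : ℤ) + (u : ℤ) := by
        have : (u : ℤ) = (lam k ω : ℤ) - (lam j ω : ℤ) + (i : ℤ) := by
          push_cast [hu]; omega
        rw [this]; push_cast [hlam1]; ring
      have harg2 : (u : ℤ) = (lam k ω : ℤ) - (lam j ω : ℤ) + (i : ℤ) := by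
        push_cast [hu]; omega
      rw [harg, h1, harg2, ih hjk i hi]
    · have : j = k + 1 := le_antisymm h h'
      subst this; intro i hi; norm_num
end Comb
section Comb2
variable {ω : BSeq}

/-- Consistency: `X̃_{-j} = X_{λ_n - j}` for any `j ≤ n`. -/
lemma tildeX_eq (hg : Good ω) {j n : ℕ} (h : j ≤ n) :
    tildeX j ω = ω ((lam n ω : ℤ) - (j : ℤ)) := by
  unfold tildeX
  have hj : j ≤ lam j ω := le_lam hg j
  have hb := block_match hg h (lam j ω - j) (Nat.sub_le _ _)
  have harg : (lam n ω : ℤ) - (lam j ω : ℤ) + ((lam j ω - j : ℕ) : ℤ) =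
      (lam n ω : ℤ) - (j : ℤ) := by
    push_cast [Nat.cast_sub hj]; ring
  have harg2 : ((lam j ω - j : ℕ) : ℤ) = (lam j ω : ℤ) - (j : ℤ) := by
    push_cast [Nat.cast_sub hj]; ring
  rw [harg] at hb
  rw [harg2] at hb
  exact hb.symm

/-- Key duality: the backward recurrence times of the reflection of `ω` at `λ_n`
agree with the forward recurrence times. -/
lemma hlam_eq (hg : Good ω) (n : ℕ) : ∀ k, k ≤ n →
    hlam k (fun j : ℕ => ω ((lam n ω : ℤ) - (j : ℤ))) = lam k ω := by
  intro k
  induction k with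
  | zero => intro _; rfl
  | succ k ih =>
    intro h
    have hk : k ≤ n := Nat.le_of_succ_le h
    set y : ℕ → Bool := fun j : ℕ => ω ((lam n ω : ℤ) - (j : ℤ)) with hy
    have hyk : hlam k y = lam k ω := ih hk
    set L : ℕ := lam k ω with hL
    set d : ℕ := sInf (Sf k ω) with hdd
    have hd := good_mem hg k
    have hdpos : 0 < d := hd.1
    have hlam1 : lam (k + 1) ω = L + d := lam_succ k ω
    have hLd : L + d ≤ lam n ω := by
      have := lam_mono (ω := ω) h; omega
    set m : ℕ := lam n ω with hm
    -- block matches from `block_match`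
    have hBk : ∀ i : ℕ, i ≤ L → ω ((m : ℤ) - (L : ℤ) + (i : ℤ)) = ω (i : ℤ) :=
      block_match hg hk
    have hBk1 : ∀ i : ℕ, i ≤ L + d → ω ((m : ℤ) - ((L : ℤ) + (d : ℤ)) + (i : ℤ)) = ω (i : ℤ) := by
      intro i hi
      have := block_match hg h i (by omega)
      rw [hlam1] at this; push_cast at this ⊢; exact this
    -- the backward candidate set
    have hSb : {t : ℕ | 0 < t ∧ ∀ i : ℕ, i ≤ hlam k y → y (t + i) = y i} =
        {t : ℕ | 0 < t ∧ ∀ i : ℕ, i ≤ L → y (t + i) = y i} := by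
      rw [hyk]
    -- d belongs to the backward set
    have hdSb : d ∈ {t : ℕ | 0 < t ∧ ∀ i : ℕ, i ≤ L → y (t + i) = y i} := by
      refine ⟨hdpos, fun i hi => ?_⟩
      have h1 : ω ((m : ℤ) - ((L : ℤ) + (d : ℤ)) + ((L - i : ℕ) : ℤ)) = ω ((L - i : ℕ) : ℤ) :=
        hBk1 (L - i) (by omega)
      have h2 : ω ((m : ℤ) - ((L : ℤ) + (d : ℤ)) + ((d + (L - i) : ℕ) : ℤ)) =
          ω ((d + (L - i) : ℕ) : ℤ) := hBk1 (d + (L - i)) (by omega)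
      have h3 : ω ((d : ℤ) + ((L - i : ℕ) : ℤ)) = ω ((L - i : ℕ) : ℤ) :=
        hd.2 (L - i) (Nat.sub_le _ _)
      have e1 : (m : ℤ) - ((L : ℤ) + (d : ℤ)) + ((L - i : ℕ) : ℤ) = (m : ℤ) - (d : ℤ) - (i : ℤ) := by
        push_cast [Nat.cast_sub hi]; ring
      have e2 : (m : ℤ) - ((L : ℤ) + (d : ℤ)) + ((d + (L - i) : ℕ) : ℤ) = (m : ℤ) - (i : ℤ) := by
        push_cast [Nat.cast_sub hi]; ring
      have e3 : ((d + (L - i) : ℕ) : ℤ) = (d : ℤ) + ((L - i : ℕ) : ℤ) := by push_cast; ring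
      have hyd : y (d + i) = ω ((m : ℤ) - (d : ℤ) - (i : ℤ)) := by
        simp only [hy]; congr 1; push_cast; ring
      have hyi : y i = ω ((m : ℤ) - (i : ℤ)) := by simp only [hy]
      calc y (d + i) = ω ((m : ℤ) - (d : ℤ) - (i : ℤ)) := hyd
        _ = ω ((L - i : ℕ) : ℤ) := by rw [← e1]; exact h1
        _ = ω ((d : ℤ) + ((L - i : ℕ) : ℤ)) := h3.symm
        _ = ω ((d + (L - i) : ℕ) : ℤ) := by rw [e3]
        _ = ω ((m : ℤ) - (i : ℤ)) := by rw [← h2, e2]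
        _ = y i := hyi.symm
    -- minimality of d in the backward set
    have hmin : ∀ t ∈ {t : ℕ | 0 < t ∧ ∀ i : ℕ, i ≤ L → y (t + i) = y i}, d ≤ t := by
      rintro t ⟨htpos, ht⟩
      by_contra hlt
      push_neg at hlt
      have hdt : d - t ∈ Sf k ω := by
        refine ⟨by omega, fun i hi => ?_⟩
        -- ω ((d-t) + i) = ω (m - L - t + i)  via hBk1 at index (d-t)+i
        have h1 : ω ((m : ℤ) - ((L : ℤ) + (d : ℤ)) + ((d - t + i : ℕ) : ℤ)) =
            ω ((d - t + i : ℕ) : ℤ) := hBk1 (d - t + i) (by omega)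
        -- backward condition at index L - i
        have h2 := ht (L - i) (Nat.sub_le _ _)
        have hy2 : ω ((m : ℤ) - (t : ℤ) - ((L - i : ℕ) : ℤ)) = ω ((m : ℤ) - ((L - i : ℕ) : ℤ)) := by
          have ha : y (t + (L - i)) = ω ((m : ℤ) - (t : ℤ) - ((L - i : ℕ) : ℤ)) := by
            simp only [hy]; congr 1; push_cast; ring
          have hb : y (L - i) = ω ((m : ℤ) - ((L - i : ℕ) : ℤ)) := by simp only [hy]
          rw [ha, hb] at h2; exact h2
        have h3 : ω ((m : ℤ) - (L : ℤ) + (i : ℤ)) = ω (i : ℤ) := hBk i hi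
        have e1 : (m : ℤ) - ((L : ℤ) + (d : ℤ)) + ((d - t + i : ℕ) : ℤ) =
            (m : ℤ) - (t : ℤ) - ((L - i : ℕ) : ℤ) := by
          push_cast [Nat.cast_sub (show i ≤ L from hi), Nat.cast_sub (le_of_lt hlt)]; ring
        have e2 : (m : ℤ) - ((L - i : ℕ) : ℤ) = (m : ℤ) - (L : ℤ) + (i : ℤ) := by
          push_cast [Nat.cast_sub (show i ≤ L from hi)]; ring
        have e3 : ((d - t + i : ℕ) : ℤ) = ((d - t : ℕ) : ℤ) + (i : ℤ) := by push_cast; ring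
        calc ω (((d - t : ℕ) : ℤ) + (i : ℤ)) = ω ((d - t + i : ℕ) : ℤ) := by rw [← e3]
          _ = ω ((m : ℤ) - ((L : ℤ) + (d : ℤ)) + ((d - t + i : ℕ) : ℤ)) := h1.symm
          _ = ω ((m : ℤ) - (t : ℤ) - ((L - i : ℕ) : ℤ)) := by rw [e1]
          _ = ω ((m : ℤ) - ((L - i : ℕ) : ℤ)) := hy2
          _ = ω ((m : ℤ) - (L : ℤ) + (i : ℤ)) := by rw [e2]
          _ = ω (i : ℤ) := h3
      have : d ≤ d - t := Nat.sInf_le hdt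
      omega
    have hsInf : sInf {t : ℕ | 0 < t ∧ ∀ i : ℕ, i ≤ hlam k y → y (t + i) = y i} = d := by
      rw [hSb]
      refine le_antisymm (Nat.sInf_le hdSb) (hmin _ (Nat.sInf_mem ⟨d, hdSb⟩))
    show hlam k y + _ = lam (k + 1) ω
    rw [hsInf, hyk, hlam1]
end Comb2
section Meas

lemma measurableSet_coord_eq (a b : ℤ) : MeasurableSet {ω : BSeq | ω a = ω b} :=
  measurableSet_eq_fun (measurable_pi_apply a) (measurable_pi_apply b)

lemma measurableSet_coord_const (a : ℤ) (c : Bool) : MeasurableSet {ω : BSeq | ω a = c} :=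
  measurableSet_eq_fun (measurable_pi_apply a) measurable_const

lemma measurable_sInf_aux {α : Type*} [MeasurableSpace α] (S : α → Set ℕ)
    (hS : ∀ t, MeasurableSet {a | t ∈ S a}) (h0 : ∀ a, 0 ∉ S a) :
    Measurable fun a => sInf (S a) := by
  apply measurable_to_countable'
  intro s
  rcases Nat.eq_zero_or_pos s with rfl | hs
  · have : (fun a => sInf (S a)) ⁻¹' {0} = {a | ∀ t, t ∉ S a} := by
      ext a
      simp only [Set.mem_preimage, Set.mem_singleton_iff, Set.mem_setOf_eq]
      constructor
      · intro h t ht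
        have hne : (S a).Nonempty := ⟨t, ht⟩
        have := Nat.sInf_mem hne
        rw [h] at this
        exact h0 a this
      · intro h
        have : S a = ∅ := Set.eq_empty_iff_forall_notMem.mpr h
        simp [this, Nat.sInf_empty]
    rw [this]
    have e : {a | ∀ t, t ∉ S a} = ⋂ t, {a | t ∈ S a}ᶜ := by ext a; simp
    rw [e]
    exact MeasurableSet.iInter fun t => (hS t).compl
  · have : (fun a => sInf (S a)) ⁻¹' {s} = {a | s ∈ S a} ∩ ⋂ t ∈ Finset.range s, {a | t ∉ S a} := by
      ext a
      simp only [Set.mem_preimage, Set.mem_singleton_iff, Set.mem_inter_iff, Set.mem_setOf_eq,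
        Set.mem_iInter, Finset.mem_range]
      constructor
      · intro h
        have hne : (S a).Nonempty := by
          by_contra hemp
          rw [Set.not_nonempty_iff_eq_empty] at hemp
          simp [hemp, Nat.sInf_empty] at h
          omega
        exact ⟨h ▸ Nat.sInf_mem hne, fun t ht => Nat.notMem_of_lt_sInf (h ▸ ht)⟩
      · rintro ⟨hmem, hlt⟩
        refine le_antisymm (Nat.sInf_le hmem) ?_
        by_contra hc
        push_neg at hc
        exact hlt _ hc (Nat.sInf_mem ⟨s, hmem⟩)
    rw [this]
    exact (hS s).inter (MeasurableSet.biInter (Finset.range s).countable_toSet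
      fun t _ => (hS t).compl)

lemma measurableSet_mem_Sf (k : ℕ) (hlamk : Measurable (lam k)) (t : ℕ) :
    MeasurableSet {ω : BSeq | t ∈ Sf k ω} := by
      have : {ω : BSeq | t ∈ Sf k ω} =
          ⋃ L : ℕ, (lam k ⁻¹' {L}) ∩
            (if 0 < t then ⋂ i ∈ Finset.range (L + 1), {ω : BSeq | ω ((t : ℤ) + (i : ℤ)) = ω (i : ℤ)}
             else ∅) := by
        ext ω
        simp only [Set.mem_setOf_eq, Set.mem_iUnion, Set.mem_inter_iff, Set.mem_preimage,
          Set.mem_singleton_iff]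
        constructor
        · rintro ⟨htpos, hall⟩
          refine ⟨lam k ω, rfl, ?_⟩
          rw [if_pos htpos]
          simp only [Set.mem_iInter, Finset.mem_range, Set.mem_setOf_eq]
          intro i hi
          exact hall i (by omega)
        · rintro ⟨L, hL, hmem⟩
          by_cases htpos : 0 < t
          · rw [if_pos htpos] at hmem
            simp only [Set.mem_iInter, Finset.mem_range, Set.mem_setOf_eq] at hmem
            exact ⟨htpos, fun i hi => hmem i (by omega)⟩
          · rw [if_neg htpos] at hmem
            exact absurd hmem (Set.notMem_empty ω)
      rw [this]
      refine MeasurableSet.iUnion fun L => (hlamk (measurableSet_singleton L)).inter ?_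
      split_ifs
      · exact MeasurableSet.biInter (Finset.range (L + 1)).countable_toSet
          fun i _ => measurableSet_coord_eq _ _
      · exact MeasurableSet.empty

lemma measurable_lam (k : ℕ) : Measurable (lam k) := by
  induction k with
  | zero => exact measurable_const
  | succ k ih =>
    have hS : ∀ t, MeasurableSet {ω : BSeq | t ∈ Sf k ω} := measurableSet_mem_Sf k ih
    have hsinf : Measurable fun ω => sInf (Sf k ω) :=
      measurable_sInf_aux _ hS (fun ω h => absurd h.1 (lt_irrefl 0))
    exact ih.add hsinf

lemma measurable_hlam (k : ℕ) : Measurable (hlam k) := by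
  induction k with
  | zero => exact measurable_const
  | succ k ih =>
    have hS : ∀ t, MeasurableSet {y : ℕ → Bool |
        t ∈ {t : ℕ | 0 < t ∧ ∀ i : ℕ, i ≤ hlam k y → y (t + i) = y i}} := by
      intro t
      have : {y : ℕ → Bool | 0 < t ∧ ∀ i : ℕ, i ≤ hlam k y → y (t + i) = y i} =
          ⋃ L : ℕ, (hlam k ⁻¹' {L}) ∩
            (if 0 < t then ⋂ i ∈ Finset.range (L + 1), {y : ℕ → Bool | y (t + i) = y i}
             else ∅) := by
        ext y
        simp only [Set.mem_setOf_eq, Set.mem_iUnion, Set.mem_inter_iff, Set.mem_preimage,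
          Set.mem_singleton_iff]
        constructor
        · rintro ⟨htpos, hall⟩
          refine ⟨hlam k y, rfl, ?_⟩
          rw [if_pos htpos]
          simp only [Set.mem_iInter, Finset.mem_range, Set.mem_setOf_eq]
          intro i hi
          exact hall i (by omega)
        · rintro ⟨L, hL, hmem⟩
          by_cases htpos : 0 < t
          · rw [if_pos htpos] at hmem
            simp only [Set.mem_iInter, Finset.mem_range, Set.mem_setOf_eq] at hmem
            exact ⟨htpos, fun i hi => hmem i (by omega)⟩
          · rw [if_neg htpos] at hmem
            exact absurd hmem (Set.notMem_empty y)
      exact this ▸ MeasurableSet.iUnion fun L => (ih (measurableSet_singleton L)).inter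
        (by split_ifs
            · exact MeasurableSet.biInter (Finset.range (L + 1)).countable_toSet
                fun i _ => measurableSet_eq_fun (measurable_pi_apply _) (measurable_pi_apply _)
            · exact MeasurableSet.empty)
    have hsinf : Measurable fun y : ℕ → Bool =>
        sInf {t : ℕ | 0 < t ∧ ∀ i : ℕ, i ≤ hlam k y → y (t + i) = y i} :=
      measurable_sInf_aux _ hS (fun y h => absurd h.1 (lt_irrefl 0))
    exact ih.add hsinf

lemma measurable_past : Measurable past :=
  measurable_pi_lambda _ fun j => measurable_pi_apply _

lemma measurable_apply_int {f : BSeq → ℤ} (hf : Measurable f) :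
    Measurable fun ω : BSeq => ω (f ω) := by
  apply measurable_to_countable'
  intro b
  have : (fun ω : BSeq => ω (f ω)) ⁻¹' {b} =
      ⋃ z : ℤ, (f ⁻¹' {z}) ∩ {ω : BSeq | ω z = b} := by
    ext ω
    simp only [Set.mem_preimage, Set.mem_singleton_iff, Set.mem_iUnion, Set.mem_inter_iff,
      Set.mem_setOf_eq]
    exact ⟨fun h => ⟨f ω, rfl, h⟩, fun ⟨z, hz, h⟩ => hz ▸ h⟩
  rw [this]
  exact MeasurableSet.iUnion fun z => (hf (measurableSet_singleton z)).inter
    (measurableSet_coord_const z b)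

lemma measurable_tilSeq : Measurable tilSeq := by
  apply measurable_pi_lambda
  intro j
  have : (fun ω => tilSeq ω j) = fun ω : BSeq => ω ((lam j ω : ℤ) - (j : ℤ)) := rfl
  rw [this]
  exact measurable_apply_int ((measurable_from_top.comp (measurable_lam j)).sub measurable_const)

lemma measurableSet_good : MeasurableSet {ω : BSeq | Good ω} := by
  have : {ω : BSeq | Good ω} = ⋂ k, ⋃ t, {ω : BSeq | t ∈ Sf k ω} := by
    ext ω
    simp only [Set.mem_setOf_eq, Set.mem_iInter, Set.mem_iUnion, Good, Set.Nonempty]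
  rw [this]
  exact MeasurableSet.iInter fun k => MeasurableSet.iUnion fun t =>
    measurableSet_mem_Sf k (measurable_lam k) t

end Meas
section Poin

lemma shift_iterate (t : ℕ) (ω : BSeq) (z : ℤ) : (shift^[t] ω) z = ω (z + t) := by
  induction t generalizing ω z with
  | zero => simp
  | succ t ih =>
    rw [Function.iterate_succ_apply, ih]
    show ω (z + t + 1) = ω (z + (t + 1 : ℕ))
    congr 1; push_cast; ring

/-- The cylinder of `ω`'s matching the pattern `v` on `[0, L]`. -/
def CylZ (L : ℕ) (v : Fin (L + 1) → Bool) : Set BSeq :=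
  {ω : BSeq | ∀ i : Fin (L + 1), ω ((i : ℕ) : ℤ) = v i}

lemma measurableSet_cylZ (L : ℕ) (v : Fin (L + 1) → Bool) : MeasurableSet (CylZ L v) := by
  have : CylZ L v = ⋂ i : Fin (L + 1), {ω : BSeq | ω ((i : ℕ) : ℤ) = v i} := by
    ext ω; simp [CylZ]
  rw [this]
  exact MeasurableSet.iInter fun i => measurableSet_coord_const _ _

lemma good_ae (μ : Measure BSeq) [IsProbabilityMeasure μ]
    (hstat : MeasurePreserving shift μ μ) : μ {ω | ¬ Good ω} = 0 := by
  have hcons : MeasureTheory.Conservative shift μ := hstat.conservative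
  have hN : ∀ (L : ℕ) (v : Fin (L + 1) → Bool),
      μ {ω ∈ CylZ L v | ∀ t ≥ 1, shift^[t] ω ∉ CylZ L v} = 0 := fun L v =>
    hcons.measure_mem_forall_ge_image_notMem_eq_zero
      (measurableSet_cylZ L v).nullMeasurableSet 1
  have hsub : {ω | ¬ Good ω} ⊆
      ⋃ (L : ℕ) (v : Fin (L + 1) → Bool),
        {ω ∈ CylZ L v | ∀ t ≥ 1, shift^[t] ω ∉ CylZ L v} := by
    intro ω hω
    simp only [Set.mem_setOf_eq, Good, not_forall] at hω
    obtain ⟨k, hk⟩ := hω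
    rw [Set.not_nonempty_iff_eq_empty] at hk
    set L := lam k ω with hL
    set v : Fin (L + 1) → Bool := fun i => ω ((i : ℕ) : ℤ) with hv
    simp only [Set.mem_iUnion]
    refine ⟨L, v, fun i => rfl, fun t ht hmem => ?_⟩
    have htS : t ∈ Sf k ω := by
      refine ⟨ht, fun i hi => ?_⟩
      have h1 : (shift^[t] ω) ((⟨i, by omega⟩ : Fin (L + 1)) : ℕ) = v ⟨i, by omega⟩ :=
        hmem ⟨i, by omega⟩
      rw [shift_iterate] at h1
      simp only [hv] at h1
      calc ω ((t : ℤ) + (i : ℤ)) = ω ((i : ℤ) + (t : ℤ)) := by ring_nf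
        _ = ω ((i : ℤ)) := h1
    rw [hk] at htS
    exact htS
  refine measure_mono_null hsub ?_
  exact measure_iUnion_null fun L => measure_iUnion_null fun v => hN L v

end Poin
section Main1

variable (μ : Measure BSeq) [IsProbabilityMeasure μ]

/-- The tilde event. -/
def TEv (n : ℕ) (x : ℕ → Bool) : Set BSeq := {ω | ∀ i : ℕ, i ≤ n → tilSeq ω i = x i}

/-- The past event. -/
def PEv (n : ℕ) (x : ℕ → Bool) : Set BSeq := {ω | ∀ i : ℕ, i ≤ n → past ω i = x i}

lemma measurableSet_TEv (n : ℕ) (x : ℕ → Bool) : MeasurableSet (TEv n x) := by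
  have : TEv n x = ⋂ i ∈ Finset.range (n + 1), {ω : BSeq | tilSeq ω i = x i} := by
    ext ω
    simp only [TEv, Set.mem_setOf_eq, Set.mem_iInter, Finset.mem_range]
    exact ⟨fun h i hi => h i (by omega), fun h i hi => h i (by omega)⟩
  rw [this]
  exact MeasurableSet.biInter (Finset.range (n + 1)).countable_toSet fun i _ =>
    measurableSet_eq_fun ((measurable_pi_apply i).comp measurable_tilSeq) measurable_const

lemma measurableSet_PEv (n : ℕ) (x : ℕ → Bool) : MeasurableSet (PEv n x) := by
  have : PEv n x = ⋂ i ∈ Finset.range (n + 1), {ω : BSeq | past ω i = x i} := by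
    ext ω
    simp only [PEv, Set.mem_setOf_eq, Set.mem_iInter, Finset.mem_range]
    exact ⟨fun h i hi => h i (by omega), fun h i hi => h i (by omega)⟩
  rw [this]
  exact MeasurableSet.biInter (Finset.range (n + 1)).countable_toSet fun i _ =>
    measurableSet_eq_fun ((measurable_pi_apply i).comp measurable_past) measurable_const

lemma tilde_le (hstat : MeasurePreserving shift μ μ) (n : ℕ) (x : ℕ → Bool) :
    μ (TEv n x) ≤ μ (PEv n x) := by
  set G : Set BSeq := {ω | Good ω} with hG
  set D : ℕ → Set BSeq := fun m => PEv n x ∩ {ω | hlam n (past ω) = m} with hD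
  have hDmeas : ∀ m, MeasurableSet (D m) := fun m =>
    (measurableSet_PEv n x).inter
      (((measurable_hlam n).comp measurable_past) (measurableSet_singleton m))
  have hDdisj : Pairwise (Function.onFun Disjoint D) := by
    intro m m' hmm
    simp only [Function.onFun, Set.disjoint_left]
    rintro ω ⟨-, h1⟩ ⟨-, h2⟩
    exact hmm (h1.symm.trans h2)
  -- step 1 : throw away the null set
  have h1 : μ (TEv n x) ≤ μ (TEv n x ∩ G) := by
    calc μ (TEv n x) ≤ μ ((TEv n x ∩ G) ∪ {ω | ¬ Good ω}) := by
          apply measure_mono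
          intro ω hω
          by_cases hg : Good ω
          · exact Or.inl ⟨hω, hg⟩
          · exact Or.inr hg
      _ ≤ μ (TEv n x ∩ G) + μ {ω | ¬ Good ω} := measure_union_le _ _
      _ = μ (TEv n x ∩ G) := by rw [good_ae μ hstat, add_zero]
  -- step 2 : decompose according to `lam n`
  have h2 : μ (TEv n x ∩ G) ≤ ∑' m : ℕ, μ (TEv n x ∩ G ∩ {ω | lam n ω = m}) := by
    have : TEv n x ∩ G = ⋃ m : ℕ, (TEv n x ∩ G ∩ {ω | lam n ω = m}) := by
      ext ω
      simp only [Set.mem_iUnion, Set.mem_inter_iff, Set.mem_setOf_eq]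
      exact ⟨fun h => ⟨lam n ω, h, rfl⟩, fun ⟨m, h, _⟩ => h⟩
    conv_lhs => rw [this]
    exact measure_iUnion_le (μ := μ) fun m => TEv n x ∩ G ∩ {ω | lam n ω = m}
  -- step 3 : each piece is carried into `D m` by `shift^[m]`
  have h3 : ∀ m, μ (TEv n x ∩ G ∩ {ω | lam n ω = m}) ≤ μ (D m) := by
    intro m
    have hsub : TEv n x ∩ G ∩ {ω | lam n ω = m} ⊆ shift^[m] ⁻¹' (D m) := by
      rintro ω ⟨⟨hT, hg⟩, hm⟩
      simp only [Set.mem_setOf_eq] at hm hg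
      have hpast : past (shift^[m] ω) = fun j : ℕ => ω ((lam n ω : ℤ) - (j : ℤ)) := by
        funext j
        show (shift^[m] ω) (-(j : ℤ)) = _
        rw [shift_iterate]
        congr 1
        rw [← hm]
        ring
      constructor
      · intro i hi
        rw [hpast]
        show ω ((lam n ω : ℤ) - (i : ℤ)) = x i
        rw [← tildeX_eq hg hi]
        exact hT i hi
      · show hlam n (past (shift^[m] ω)) = m
        rw [hpast, hlam_eq hg n n le_rfl, hm]
    calc μ (TEv n x ∩ G ∩ {ω | lam n ω = m}) ≤ μ (shift^[m] ⁻¹' (D m)) := measure_mono hsub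
      _ = μ (D m) := (hstat.iterate m).measure_preimage (hDmeas m).nullMeasurableSet
  -- step 4 : sum up
  calc μ (TEv n x) ≤ ∑' m : ℕ, μ (TEv n x ∩ G ∩ {ω | lam n ω = m}) := h1.trans h2
    _ ≤ ∑' m : ℕ, μ (D m) := ENNReal.tsum_le_tsum h3
    _ = μ (⋃ m : ℕ, D m) := (measure_iUnion hDdisj hDmeas).symm
    _ ≤ μ (PEv n x) := by
        refine measure_mono ?_
        intro ω hω
        simp only [Set.mem_iUnion] at hω
        obtain ⟨m, hm, -⟩ := hω
        exact hm

end Main1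
section Main2

variable (μ : Measure BSeq) [IsProbabilityMeasure μ]

/-- Extension of a finite pattern by `false`. -/
def extP (n : ℕ) (v : Fin (n + 1) → Bool) : ℕ → Bool :=
  fun j => if h : j < n + 1 then v ⟨j, h⟩ else false

lemma TEv_extP (n : ℕ) (x : ℕ → Bool) :
    TEv n x = TEv n (extP n (fun i : Fin (n + 1) => x i)) := by
  ext ω
  simp only [TEv, Set.mem_setOf_eq]
  constructor <;> intro h i hi <;>
    · have := h i hi
      simpa [extP, Nat.lt_succ_iff.mpr hi] using this

lemma PEv_extP (n : ℕ) (x : ℕ → Bool) :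
    PEv n x = PEv n (extP n (fun i : Fin (n + 1) => x i)) := by
  ext ω
  simp only [PEv, Set.mem_setOf_eq]
  constructor <;> intro h i hi <;>
    · have := h i hi
      simpa [extP, Nat.lt_succ_iff.mpr hi] using this

lemma sum_TEv (n : ℕ) :
    ∑ v : Fin (n + 1) → Bool, μ (TEv n (extP n v)) = 1 := by
  have hdisj : ((Finset.univ : Finset (Fin (n + 1) → Bool)) : Set (Fin (n + 1) → Bool)).PairwiseDisjoint
      (fun v => TEv n (extP n v)) := by
    intro v _ v' _ hvv
    simp only [Function.onFun, Set.disjoint_left]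
    intro ω h1 h2
    apply hvv
    funext i
    have e1 := h1 i (Nat.lt_succ_iff.mp i.isLt)
    have e2 := h2 i (Nat.lt_succ_iff.mp i.isLt)
    simp only [extP, i.isLt, dif_pos, Fin.eta] at e1 e2
    rw [← e1, ← e2]
  have hcover : (⋃ v ∈ (Finset.univ : Finset (Fin (n + 1) → Bool)), TEv n (extP n v)) =
      Set.univ := by
    ext ω
    simp only [Set.mem_iUnion, Finset.mem_univ, Set.mem_univ, iff_true, exists_prop, true_and]
    refine ⟨fun i => tilSeq ω i, fun i hi => ?_⟩
    simp [extP, Nat.lt_succ_iff.mpr hi]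
  rw [← measure_biUnion_finset hdisj (fun v _ => measurableSet_TEv n (extP n v)), hcover,
    measure_univ]

lemma sum_PEv (n : ℕ) :
    ∑ v : Fin (n + 1) → Bool, μ (PEv n (extP n v)) = 1 := by
  have hdisj : ((Finset.univ : Finset (Fin (n + 1) → Bool)) : Set (Fin (n + 1) → Bool)).PairwiseDisjoint
      (fun v => PEv n (extP n v)) := by
    intro v _ v' _ hvv
    simp only [Function.onFun, Set.disjoint_left]
    intro ω h1 h2
    apply hvv
    funext i
    have e1 := h1 i (Nat.lt_succ_iff.mp i.isLt)
    have e2 := h2 i (Nat.lt_succ_iff.mp i.isLt)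
    simp only [extP, i.isLt, dif_pos, Fin.eta] at e1 e2
    rw [← e1, ← e2]
  have hcover : (⋃ v ∈ (Finset.univ : Finset (Fin (n + 1) → Bool)), PEv n (extP n v)) =
      Set.univ := by
    ext ω
    simp only [Set.mem_iUnion, Finset.mem_univ, Set.mem_univ, iff_true, exists_prop, true_and]
    refine ⟨fun i => past ω i, fun i hi => ?_⟩
    simp [extP, Nat.lt_succ_iff.mpr hi]
  rw [← measure_biUnion_finset hdisj (fun v _ => measurableSet_PEv n (extP n v)), hcover,
    measure_univ]

lemma tilde_eq (hstat : MeasurePreserving shift μ μ) (n : ℕ) (x : ℕ → Bool) :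
    μ (TEv n x) = μ (PEv n x) := by
  -- first the version for extended finite patterns, via the summation trick
  have key : ∀ v : Fin (n + 1) → Bool, μ (TEv n (extP n v)) = μ (PEv n (extP n v)) := by
    have hle : ∀ v : Fin (n + 1) → Bool,
        (μ (TEv n (extP n v))).toReal ≤ (μ (PEv n (extP n v))).toReal := fun v =>
      ENNReal.toReal_mono (measure_ne_top μ _) (tilde_le μ hstat n (extP n v))
    have hsum : ∑ v : Fin (n + 1) → Bool, (μ (TEv n (extP n v))).toReal =
        ∑ v : Fin (n + 1) → Bool, (μ (PEv n (extP n v))).toReal := by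
      rw [← ENNReal.toReal_sum (fun v _ => measure_ne_top μ _),
        ← ENNReal.toReal_sum (fun v _ => measure_ne_top μ _), sum_TEv μ n, sum_PEv μ n]
    have := (Finset.sum_eq_sum_iff_of_le (fun v _ => hle v)).mp hsum
    intro v
    have h := this v (Finset.mem_univ v)
    exact (ENNReal.toReal_eq_toReal_iff' (measure_ne_top μ _) (measure_ne_top μ _)).mp h
  rw [TEv_extP n x, PEv_extP n x]
  exact key _

end Main2
section Main3

/-- Cylinder set on one-sided sequences. -/
def Cyl (n : ℕ) (x : ℕ → Bool) : Set (ℕ → Bool) := {y | ∀ i : ℕ, i ≤ n → y i = x i}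

lemma measurableSet_Cyl (n : ℕ) (x : ℕ → Bool) : MeasurableSet (Cyl n x) := by
  have : Cyl n x = ⋂ i ∈ Finset.range (n + 1), {y : ℕ → Bool | y i = x i} := by
    ext y
    simp only [Cyl, Set.mem_setOf_eq, Set.mem_iInter, Finset.mem_range]
    exact ⟨fun h i hi => h i (by omega), fun h i hi => h i (by omega)⟩
  rw [this]
  exact MeasurableSet.biInter (Finset.range (n + 1)).countable_toSet fun i _ =>
    measurableSet_eq_fun (measurable_pi_apply i) measurable_const

lemma isPiSystem_cyl : IsPiSystem {S : Set (ℕ → Bool) | ∃ n x, S = Cyl n x} := by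
  rintro S ⟨n, x, rfl⟩ S' ⟨n', x', rfl⟩ hne
  obtain ⟨y, hy1, hy2⟩ := hne
  rcases le_total n n' with h | h
  · refine ⟨n', x', ?_⟩
    apply Set.inter_eq_self_of_subset_right
    intro z hz i hi
    calc z i = x' i := hz i (by omega)
      _ = y i := (hy2 i (by omega)).symm
      _ = x i := hy1 i hi
  · refine ⟨n, x, ?_⟩
    apply Set.inter_eq_self_of_subset_left
    intro z hz i hi
    calc z i = x i := hz i (by omega)
      _ = y i := (hy1 i (by omega)).symm
      _ = x' i := hy2 i hi

lemma generateFrom_cyl :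
    (inferInstance : MeasurableSpace (ℕ → Bool)) =
      MeasurableSpace.generateFrom {S : Set (ℕ → Bool) | ∃ n x, S = Cyl n x} := by
  refine le_antisymm ?_ ?_
  · -- pi σ-algebra ≤ generated by cylinders
    rw [show (inferInstance : MeasurableSpace (ℕ → Bool)) = MeasurableSpace.pi from rfl,
      MeasurableSpace.pi]
    refine iSup_le fun i => ?_
    intro s hs
    obtain ⟨A, -, rfl⟩ : ∃ A : Set Bool, MeasurableSet A ∧ (fun y : ℕ → Bool => y i) ⁻¹' A = s := by
      obtain ⟨A, hA, hA2⟩ := hs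
      exact ⟨A, trivial, hA2⟩
    have hsingle : ∀ b : Bool,
        MeasurableSet[MeasurableSpace.generateFrom {S : Set (ℕ → Bool) | ∃ n x, S = Cyl n x}]
          {y : ℕ → Bool | y i = b} := by
      intro b
      have : {y : ℕ → Bool | y i = b} =
          ⋃ (v : Fin (i + 1) → Bool) (_ : v ⟨i, Nat.lt_succ_self i⟩ = b),
            Cyl i (extP i v) := by
        ext y
        simp only [Set.mem_setOf_eq, Set.mem_iUnion]
        constructor
        · intro hb
          refine ⟨fun j => y j, by simpa using hb, fun j hj => ?_⟩
          simp [extP, Nat.lt_succ_iff.mpr hj]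
        · rintro ⟨v, hv, hcyl⟩
          have := hcyl i le_rfl
          simp only [extP, Nat.lt_succ_self i, dif_pos] at this
          rw [this, hv]
      rw [this]
      exact MeasurableSet.iUnion fun v => MeasurableSet.iUnion fun _ =>
        MeasurableSpace.measurableSet_generateFrom ⟨i, extP i v, rfl⟩
    have : (fun y : ℕ → Bool => y i) ⁻¹' A = ⋃ b ∈ A, {y : ℕ → Bool | y i = b} := by
      ext y
      simp only [Set.mem_preimage, Set.mem_iUnion, Set.mem_setOf_eq, exists_prop]
      exact ⟨fun h => ⟨y i, h, rfl⟩, fun ⟨b, hb, h⟩ => h ▸ hb⟩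
    rw [this]
    exact MeasurableSet.biUnion A.to_countable fun b _ => hsingle b
  · refine MeasurableSpace.generateFrom_le ?_
    rintro S ⟨n, x, rfl⟩
    exact measurableSet_Cyl n x

/-- Prepending a symbol to a pattern. -/
def consP (b : Bool) (x : ℕ → Bool) : ℕ → Bool := fun j =>
  match j with
  | 0 => b
  | j + 1 => x j

lemma shiftSeq_preimage_cyl (n : ℕ) (x : ℕ → Bool) :
    (fun y : ℕ → Bool => fun j => y (j + 1)) ⁻¹' Cyl n x =
      ⋃ b : Bool, Cyl (n + 1) (consP b x) := by
  ext y
  simp only [Set.mem_preimage, Cyl, Set.mem_setOf_eq, Set.mem_iUnion]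
  constructor
  · intro h
    refine ⟨y 0, fun i hi => ?_⟩
    match i with
    | 0 => rfl
    | i + 1 => exact h i (by omega)
  · rintro ⟨b, hb⟩ i hi
    exact hb (i + 1) (by omega)

lemma cyl_disjoint_cons (n : ℕ) (x : ℕ → Bool) :
    Pairwise (Function.onFun Disjoint (fun b => Cyl (n + 1) (consP b x))) := by
  intro b b' hbb
  simp only [Function.onFun, Set.disjoint_left]
  intro y h1 h2
  exact hbb ((h1 0 (by omega)).symm.trans (h2 0 (by omega)))

end Main3
/-- The one-sided process `X̃` has the same finite-dimensional
distributions as `X`: `P(X̃_{-n}^0 = x_{-n}^0) = P(X_{-n}^0 = x_{-n}^0)` for all `n` and `x`;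
in particular `X̃` is stationary (its law is invariant under the one-sided shift). -/
theorem tilde_same_law (μ : Measure BSeq) [IsProbabilityMeasure μ]
    (hstat : MeasurePreserving shift μ μ) :
    (∀ (n : ℕ) (x : ℕ → Bool),
        μ {ω | ∀ i : ℕ, i ≤ n → tilSeq ω i = x i} =
          μ {ω | ∀ i : ℕ, i ≤ n → past ω i = x i}) ∧
      Measure.map (fun y : ℕ → Bool => fun j => y (j + 1)) (Measure.map tilSeq μ) =
        Measure.map tilSeq μ := by
  have part1 : ∀ (n : ℕ) (x : ℕ → Bool),
      μ {ω | ∀ i : ℕ, i ≤ n → tilSeq ω i = x i} =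
        μ {ω | ∀ i : ℕ, i ≤ n → past ω i = x i} := fun n x => tilde_eq μ hstat n x
  refine ⟨part1, ?_⟩
  have hms : Measurable (fun y : ℕ → Bool => fun j => y (j + 1)) :=
    measurable_pi_lambda _ fun j => measurable_pi_apply _
  have hmt : Measurable tilSeq := measurable_tilSeq
  haveI h1 : IsProbabilityMeasure (Measure.map tilSeq μ) :=
    Measure.isProbabilityMeasure_map hmt.aemeasurable
  haveI h2 : IsProbabilityMeasure
      (Measure.map (fun y : ℕ → Bool => fun j => y (j + 1)) (Measure.map tilSeq μ)) :=
    Measure.isProbabilityMeasure_map hms.aemeasurable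
  refine MeasureTheory.ext_of_generate_finite _ generateFrom_cyl isPiSystem_cyl ?_ ?_
  · rintro S ⟨n, x, rfl⟩
    rw [Measure.map_apply hms (measurableSet_Cyl n x),
      Measure.map_apply hmt (hms (measurableSet_Cyl n x)),
      Measure.map_apply hmt (measurableSet_Cyl n x)]
    have hTP : ∀ (m : ℕ) (z : ℕ → Bool), tilSeq ⁻¹' Cyl m z = TEv m z := fun m z => rfl
    have hPP : ∀ (m : ℕ) (z : ℕ → Bool), past ⁻¹' Cyl m z = PEv m z := fun m z => rfl
    calc μ (tilSeq ⁻¹' ((fun y : ℕ → Bool => fun j => y (j + 1)) ⁻¹' Cyl n x))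
        = μ (⋃ b : Bool, tilSeq ⁻¹' Cyl (n + 1) (consP b x)) := by
          rw [shiftSeq_preimage_cyl, Set.preimage_iUnion]
      _ = ∑' b : Bool, μ (tilSeq ⁻¹' Cyl (n + 1) (consP b x)) := by
          refine measure_iUnion ?_ fun b => (hTP _ _ ▸ measurableSet_TEv (n + 1) (consP b x))
          intro b b' hbb
          exact Set.disjoint_left.mpr fun ω ha hb => Set.disjoint_left.mp
            (cyl_disjoint_cons n x hbb) ha hb
      _ = ∑' b : Bool, μ (past ⁻¹' Cyl (n + 1) (consP b x)) := by
          refine tsum_congr fun b => ?_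
          rw [hTP, hPP]
          exact tilde_eq μ hstat (n + 1) (consP b x)
      _ = μ (⋃ b : Bool, past ⁻¹' Cyl (n + 1) (consP b x)) := by
          refine (measure_iUnion ?_ fun b => (hPP _ _ ▸ measurableSet_PEv (n + 1) (consP b x))).symm
          intro b b' hbb
          exact Set.disjoint_left.mpr fun ω ha hb => Set.disjoint_left.mp
            (cyl_disjoint_cons n x hbb) ha hb
      _ = μ (past ⁻¹' ((fun y : ℕ → Bool => fun j => y (j + 1)) ⁻¹' Cyl n x)) := by
          rw [shiftSeq_preimage_cyl, Set.preimage_iUnion]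
      _ = μ (past ⁻¹' Cyl n x) := by
          have hkey : shift ⁻¹' (past ⁻¹' ((fun y : ℕ → Bool => fun j => y (j + 1)) ⁻¹' Cyl n x)) =
              past ⁻¹' Cyl n x := by
            ext ω
            simp only [Set.mem_preimage, Cyl, Set.mem_setOf_eq]
            constructor
            · intro h i hi
              have := h i hi
              show ω (-(i : ℤ)) = x i
              have e : past (shift ω) (i + 1) = ω (-(i : ℤ)) := by
                show (shift ω) (-((i : ℕ) + 1 : ℕ) : ℤ) = ω (-(i : ℤ))
                show ω ((-((i : ℕ) + 1 : ℕ) : ℤ) + 1) = ω (-(i : ℤ))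
                congr 1; push_cast; ring
              rw [← e]; exact this
            · intro h i hi
              have e : past (shift ω) (i + 1) = ω (-(i : ℤ)) := by
                show (shift ω) (-((i : ℕ) + 1 : ℕ) : ℤ) = ω (-(i : ℤ))
                show ω ((-((i : ℕ) + 1 : ℕ) : ℤ) + 1) = ω (-(i : ℤ))
                congr 1; push_cast; ring
              show past (shift ω) (i + 1) = x i
              rw [e]; exact h i hi
          have hmeas : NullMeasurableSet
              (past ⁻¹' ((fun y : ℕ → Bool => fun j => y (j + 1)) ⁻¹' Cyl n x)) μ :=
            (measurable_past (hms (measurableSet_Cyl n x))).nullMeasurableSet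
          rw [← hstat.measure_preimage hmeas, hkey]
      _ = μ (tilSeq ⁻¹' Cyl n x) := by
          rw [hTP, hPP]
          exact (tilde_eq μ hstat n x).symm
  · simp [measure_univ]
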